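/- Let d ≥ 1, θ ∈ ℝ, and a, w_1, …, w_d ∈ ℂ satisfy Re(e^{−iθ}a) > 0 and Re(e^{−iθ}w_i) > 0 for all i = 1, …, d. Then for every α ∈ ℂ with Re(α) > d the family n ↦ (a + n_1 w_1 + ⋯ + n_d w_d)^{−α}, indexed by n ∈ ℕ_0^d and using the principal branch of the complex power, is absolutely summable (in particular a + n·w ≠ 0 for every n ∈ ℕ_0^d). -/

import Mathlib

open Complex

lemma barnes_aux_summable (d : ℕ) (r : ℝ) (hr : 1 < r) :
    Summable (fun n : Fin d → ℕ => ∏ i, ((1 : ℝ) + n i) ^ (-r)) := by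
  induction d with
  | zero => exact Summable.of_finite
  | succ d ih =>
    have base : Summable (fun n : ℕ => ((1 : ℝ) + n) ^ (-r)) := by
      have h := (Real.summable_nat_rpow (p := -r)).mpr (by linarith)
      have h1 := (summable_nat_add_iff (f := fun n : ℕ => (n : ℝ) ^ (-r)) 1).mpr h
      refine h1.congr fun n => ?_
      push_cast
      ring_nf
    have hprod := base.mul_of_nonneg ih
      (fun n => Real.rpow_nonneg (by positivity) _)
      (fun n => Finset.prod_nonneg fun i _ => Real.rpow_nonneg (by positivity) _)
    have := ((Fin.consEquiv fun _ => ℕ).symm.summable_iff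
      (f := fun p : ℕ × (Fin d → ℕ) => ((1 : ℝ) + p.1) ^ (-r) * ∏ i, ((1 : ℝ) + p.2 i) ^ (-r))).mpr hprod
    refine this.congr fun n => ?_
    simp [Fin.consEquiv, Fin.prod_univ_succ, Fin.tail]

theorem barnes_zeta_abs_summable (d : ℕ) (hd : 1 ≤ d) (θ : ℝ) (a : ℂ) (w : Fin d → ℂ)
    (ha : 0 < (Complex.exp (-(θ : ℂ) * Complex.I) * a).re)
    (hw : ∀ i, 0 < (Complex.exp (-(θ : ℂ) * Complex.I) * w i).re)
    (α : ℂ) (hα : (d : ℝ) < α.re) :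
    (∀ n : Fin d → ℕ, a + ∑ i, (n i : ℂ) * w i ≠ 0) ∧
    Summable (fun n : Fin d → ℕ => ‖(a + ∑ i, (n i : ℂ) * w i) ^ (-α)‖) := by
  set e := Complex.exp (-(θ : ℂ) * Complex.I) with he
  have hpos : 0 < d := hd
  have hne : Nonempty (Fin d) := Fin.pos_iff_nonempty.mp hpos
  set c : ℝ := min ((e * a).re) (Finset.univ.inf' Finset.univ_nonempty fun i => (e * w i).re)
    with hc_def
  have hc : 0 < c := by
    refine lt_min ha ?_
    rw [Finset.lt_inf'_iff]
    exact fun i _ => hw i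
  have hca : c ≤ (e * a).re := min_le_left _ _
  have hci : ∀ i, c ≤ (e * w i).re := fun i =>
    (min_le_right _ _).trans (Finset.inf'_le _ (Finset.mem_univ i))
  -- key real-part lower bound
  have key : ∀ n : Fin d → ℕ,
      c * (1 + ∑ i, (n i : ℝ)) ≤ (e * (a + ∑ i, (n i : ℂ) * w i)).re := by
    intro n
    have hre : (e * (a + ∑ i, (n i : ℂ) * w i)).re
        = (e * a).re + ∑ i, (n i : ℝ) * (e * w i).re := by
      rw [mul_add, Complex.add_re, Finset.mul_sum, Complex.re_sum]
      congr 1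
      refine Finset.sum_congr rfl fun i _ => ?_
      have : e * ((n i : ℂ) * w i) = ((n i : ℝ) : ℂ) * (e * w i) := by
        push_cast; ring
      rw [this, Complex.re_ofReal_mul]
    rw [hre, mul_add, mul_one, Finset.mul_sum]
    refine add_le_add hca (Finset.sum_le_sum fun i _ => ?_)
    rw [mul_comm]
    exact mul_le_mul_of_nonneg_left (hci i) (Nat.cast_nonneg _)
  have habs_e : ‖e‖ = 1 := by
    rw [he, Complex.norm_exp]
    simp
  -- norm lower bound
  have hnorm : ∀ n : Fin d → ℕ,
      c * (1 + ∑ i, (n i : ℝ)) ≤ ‖a + ∑ i, (n i : ℂ) * w i‖ := by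
    intro n
    calc c * (1 + ∑ i, (n i : ℝ)) ≤ (e * (a + ∑ i, (n i : ℂ) * w i)).re := key n
      _ ≤ ‖e * (a + ∑ i, (n i : ℂ) * w i)‖ := Complex.re_le_norm _
      _ = ‖a + ∑ i, (n i : ℂ) * w i‖ := by rw [norm_mul, habs_e, one_mul]
  have hsum_pos : ∀ n : Fin d → ℕ, (0:ℝ) < c * (1 + ∑ i, (n i : ℝ)) := by
    intro n
    have : (0:ℝ) ≤ ∑ i, (n i : ℝ) := Finset.sum_nonneg fun i _ => Nat.cast_nonneg _
    positivity
  have hzne : ∀ n : Fin d → ℕ, a + ∑ i, (n i : ℂ) * w i ≠ 0 := by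
    intro n h
    have := (hsum_pos n).trans_le (hnorm n)
    rw [h] at this; simp at this
  refine ⟨hzne, ?_⟩
  set s := α.re with hs
  have hs1 : (1:ℝ) ≤ d := by exact_mod_cast hd
  have hsd : (d:ℝ) > 0 := by positivity
  set r := s / d with hr_def
  have hr : 1 < r := (lt_div_iff₀ hsd).mpr (by linarith)
  have hge := barnes_aux_summable d r hr
  set K := Real.exp (Real.pi * |α.im|) * c ^ (-s) with hK
  refine Summable.of_nonneg_of_le (fun n => norm_nonneg _)
    (fun n => ?_) (hge.mul_left K)
  set z := a + ∑ i, (n i : ℂ) * w i with hz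
  have hz0 : z ≠ 0 := hzne n
  -- step 1 : ‖z ^ (-α)‖ ≤ abs z ^ (-s) * exp (π |α.im|)
  have step1 : ‖z ^ (-α)‖ ≤ ‖z‖ ^ (-s) * Real.exp (Real.pi * |α.im|) := by
    have h1 := Complex.norm_cpow_le z (-α)
    have h2 : ‖z‖ ^ (-α).re / Real.exp (z.arg * (-α).im)
        ≤ ‖z‖ ^ (-s) * Real.exp (Real.pi * |α.im|) := by
      rw [div_eq_mul_inv, ← Real.exp_neg, Complex.neg_re]
      refine mul_le_mul_of_nonneg_left (Real.exp_le_exp.mpr ?_)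
        (Real.rpow_nonneg (norm_nonneg _) _)
      have h3 : |z.arg * (-α).im| ≤ Real.pi * |α.im| := by
        rw [abs_mul, Complex.neg_im, abs_neg]
        exact mul_le_mul_of_nonneg_right (Complex.abs_arg_le_pi z) (abs_nonneg _)
      linarith [neg_abs_le (z.arg * (-α).im)]
    exact h1.trans h2
  -- step 2 : abs z ^ (-s) ≤ c^(-s) * ∏ (1+n i)^(-r)
  have habs_pos : 0 < ‖z‖ := (hsum_pos n).trans_le (hnorm n)
  have step2 : ‖z‖ ^ (-s) ≤ c ^ (-s) * ∏ i, ((1:ℝ) + n i) ^ (-r) := by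
    have h1 : ‖z‖ ^ (-s) ≤ (c * (1 + ∑ i, (n i : ℝ))) ^ (-s) :=
      Real.rpow_le_rpow_of_nonpos (hsum_pos n) (hnorm n) (by linarith)
    have hsum_nn : (0:ℝ) ≤ 1 + ∑ i, (n i : ℝ) := by
      have : (0:ℝ) ≤ ∑ i, (n i : ℝ) := Finset.sum_nonneg fun i _ => Nat.cast_nonneg _
      linarith
    rw [Real.mul_rpow hc.le hsum_nn] at h1
    refine h1.trans (mul_le_mul_of_nonneg_left ?_ (Real.rpow_nonneg hc.le _))
    -- (1+Σ)^(-s) ≤ ∏ (1+n i)^(-r)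
    have hprod_le : ∏ i, ((1:ℝ) + n i) ≤ (1 + ∑ i, (n i : ℝ)) ^ d := by
      calc ∏ i, ((1:ℝ) + n i) ≤ ∏ _i : Fin d, (1 + ∑ j, (n j : ℝ)) := by
            refine Finset.prod_le_prod (fun i _ => by positivity) (fun i _ => ?_)
            have : (n i : ℝ) ≤ ∑ j, (n j : ℝ) :=
              Finset.single_le_sum (f := fun j => (n j : ℝ))
                (fun j _ => Nat.cast_nonneg _) (Finset.mem_univ i)
            linarith
        _ = (1 + ∑ j, (n j : ℝ)) ^ d := by
            rw [Finset.prod_const, Finset.card_univ, Fintype.card_fin]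
    have hprod_pos : (0:ℝ) < ∏ i, ((1:ℝ) + n i) :=
      Finset.prod_pos fun i _ => by positivity
    have hsum1 : (0:ℝ) < 1 + ∑ i, (n i : ℝ) := by
      have : (0:ℝ) ≤ ∑ i, (n i : ℝ) := Finset.sum_nonneg fun i _ => Nat.cast_nonneg _
      linarith
    -- raise hprod_le to power r
    have h2 : (∏ i, ((1:ℝ) + n i)) ^ r ≤ (1 + ∑ i, (n i : ℝ)) ^ s := by
      have := Real.rpow_le_rpow hprod_pos.le hprod_le (by linarith : (0:ℝ) ≤ r)
      rwa [← Real.rpow_natCast (1 + ∑ i, (n i : ℝ)) d, ← Real.rpow_mul hsum1.le,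
        show (d:ℝ) * r = s by rw [hr_def]; field_simp] at this
    have h3 : (1 + ∑ i, (n i : ℝ)) ^ (-s) ≤ (∏ i, ((1:ℝ) + n i)) ^ (-r) := by
      rw [Real.rpow_neg hsum1.le, Real.rpow_neg hprod_pos.le]
      exact inv_anti₀ (Real.rpow_pos_of_pos hprod_pos r) h2
    refine h3.trans_eq ?_
    rw [← Real.finset_prod_rpow _ _ (fun i _ => by positivity) (-r)]
  calc ‖z ^ (-α)‖ ≤ ‖z‖ ^ (-s) * Real.exp (Real.pi * |α.im|) := step1
    _ ≤ (c ^ (-s) * ∏ i, ((1:ℝ) + n i) ^ (-r)) * Real.exp (Real.pi * |α.im|) :=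
        mul_le_mul_of_nonneg_right step2 (Real.exp_nonneg _)
    _ = K * ∏ i, ((1:ℝ) + n i) ^ (-r) := by rw [hK]; ring
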